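/- For all 3×3 permutation matrices σ, τ₀, τ₁, every n ≥ 1 and every (i₁,…,iₙ) ∈ {0,1}ⁿ: the first row of the matrix V·G_{i₁}(σ,τ₀,τ₁)⋯G_{iₙ}(σ,τ₀,τ₁) is (1,1,1), and the two-dimensional Lebesgue measure of the barycentric subtriangle Γ_{(σ,τ₀,τ₁)}(i₁,…,iₙ) equals (1/2)^{n+1}. In particular, the area of Γ_{(σ,τ₀,τ₁)}(i₁,…,iₙ) is half the area of Γ_{(σ,τ₀,τ₁)}(i₁,…,i_{n−1}). -/

import Mathlib

open Matrix MeasureTheory Filter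

noncomputable section

/-- Projection π(a,b,c) = (b/a, c/a). -/
def projPt (v : Fin 3 → ℝ) : ℝ × ℝ := (v 1 / v 0, v 2 / v 0)

def Vmat : Matrix (Fin 3) (Fin 3) ℝ := !![1,1,1; 0,1,1; 0,0,1]

def prodSeq (C : Fin 2 → Matrix (Fin 3) (Fin 3) ℝ) (i : ℕ → Fin 2) :
    ℕ → Matrix (Fin 3) (Fin 3) ℝ
  | 0 => 1
  | n + 1 => prodSeq C i n * C (i (n + 1))

/-- The subtriangle: convex hull of the π-images of the columns of V·C_{i₁}⋯C_{iₙ}. -/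
def subTri (C : Fin 2 → Matrix (Fin 3) (Fin 3) ℝ) (i : ℕ → Fin 2) (n : ℕ) :
    Set (ℝ × ℝ) :=
  convexHull ℝ (Set.range fun j : Fin 3 => projPt fun k => (Vmat * prodSeq C i n) k j)

/-- The permutation matrix of a permutation of {0,1,2}. -/
def permMat (p : Equiv.Perm (Fin 3)) : Matrix (Fin 3) (Fin 3) ℝ :=
  Matrix.of fun i j => if p j = i then 1 else 0

def G0 : Matrix (Fin 3) (Fin 3) ℝ := !![0,0,1/2; 1,0,0; 0,1,1/2]
def G1 : Matrix (Fin 3) (Fin 3) ℝ := !![1,0,1/2; 0,1,0; 0,0,1/2]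

/-- The pair of matrices G₀(σ,τ₀,τ₁) = σG₀τ₀, G₁(σ,τ₀,τ₁) = σG₁τ₁. -/
def Gtrip (σ τ0 τ1 : Matrix (Fin 3) (Fin 3) ℝ) : Fin 2 → Matrix (Fin 3) (Fin 3) ℝ :=
  ![σ * G0 * τ0, σ * G1 * τ1]

/-! ### Auxiliary lemmas -/

open Pointwise

/-- column sums are all one -/
def ColSum1 (M : Matrix (Fin 3) (Fin 3) ℝ) : Prop := ∀ j, (∑ k, M k j) = 1

lemma colSum1_mul {X Y : Matrix (Fin 3) (Fin 3) ℝ} (hX : ColSum1 X) (hY : ColSum1 Y) :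
    ColSum1 (X * Y) := by
  intro j
  simp only [Matrix.mul_apply]
  rw [Finset.sum_comm]
  calc (∑ m, ∑ k, X k m * Y m j) = ∑ m, (∑ k, X k m) * Y m j := by
        simp [Finset.sum_mul]
    _ = ∑ m, Y m j := by
        refine Finset.sum_congr rfl fun m _ => ?_
        rw [hX m, one_mul]
    _ = 1 := hY j

lemma colSum1_permMat (p : Equiv.Perm (Fin 3)) : ColSum1 (permMat p) := by
  intro j
  simp [permMat, Finset.sum_ite_eq']

lemma colSum1_G0 : ColSum1 G0 := by
  intro j
  fin_cases j <;>
    norm_num [G0, Fin.sum_univ_three, Matrix.cons_val_zero, Matrix.cons_val_one,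
      Matrix.head_cons, Matrix.vecHead, Matrix.vecTail, Matrix.cons_val_two]

lemma colSum1_G1 : ColSum1 G1 := by
  intro j
  fin_cases j <;>
    norm_num [G1, Fin.sum_univ_three, Matrix.cons_val_zero, Matrix.cons_val_one,
      Matrix.head_cons, Matrix.vecHead, Matrix.vecTail, Matrix.cons_val_two]

lemma colSum1_Gtrip (p q r : Equiv.Perm (Fin 3)) (k : Fin 2) :
    ColSum1 (Gtrip (permMat p) (permMat q) (permMat r) k) := by
  fin_cases k
  · exact colSum1_mul (colSum1_mul (colSum1_permMat p) colSum1_G0) (colSum1_permMat q)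
  · exact colSum1_mul (colSum1_mul (colSum1_permMat p) colSum1_G1) (colSum1_permMat r)

lemma colSum1_prodSeq (p q r : Equiv.Perm (Fin 3)) (i : ℕ → Fin 2) (n : ℕ) :
    ColSum1 (prodSeq (Gtrip (permMat p) (permMat q) (permMat r)) i n) := by
  induction n with
  | zero => intro j; simp [prodSeq, Matrix.one_apply, Finset.sum_ite_eq']
  | succ n ih => exact colSum1_mul ih (colSum1_Gtrip p q r _)

lemma row0_eq_colSum (M : Matrix (Fin 3) (Fin 3) ℝ) (j : Fin 3) :
    (Vmat * M) 0 j = ∑ k, M k j := by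
  simp [Matrix.mul_apply, Vmat, Fin.sum_univ_three]

/-! ### Determinants -/

lemma permMat_eq (p : Equiv.Perm (Fin 3)) :
    permMat p = ((Equiv.toPEquiv p⁻¹).toMatrix : Matrix (Fin 3) (Fin 3) ℝ) := by
  ext i j
  have hiff : p j = i ↔ p⁻¹ i = j := by
    constructor
    · rintro rfl; simp
    · rintro rfl; simp
  simp [permMat, PEquiv.toMatrix, Equiv.toPEquiv, Option.mem_def, hiff]

lemma abs_det_permMat (p : Equiv.Perm (Fin 3)) : |Matrix.det (permMat p)| = 1 := by
  rw [permMat_eq, Matrix.det_permutation]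
  rcases Int.units_eq_one_or (Equiv.Perm.sign p⁻¹) with h | h
  · rw [h]; norm_num
  · rw [h]; norm_num

lemma abs_det_G0 : |Matrix.det G0| = 1/2 := by
  rw [G0, Matrix.det_fin_three]
  norm_num [Matrix.vecHead, Matrix.vecTail, Matrix.cons_val_two]

lemma abs_det_G1 : |Matrix.det G1| = 1/2 := by
  rw [G1, Matrix.det_fin_three]
  norm_num [Matrix.vecHead, Matrix.vecTail, Matrix.cons_val_two]

lemma abs_det_Gtrip (p q r : Equiv.Perm (Fin 3)) (k : Fin 2) :
    |Matrix.det (Gtrip (permMat p) (permMat q) (permMat r) k)| = 1/2 := by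
  fin_cases k
  · show |Matrix.det (permMat p * G0 * permMat q)| = 1/2
    rw [Matrix.det_mul, Matrix.det_mul, abs_mul, abs_mul,
      abs_det_permMat, abs_det_permMat, abs_det_G0]
    norm_num
  · show |Matrix.det (permMat p * G1 * permMat r)| = 1/2
    rw [Matrix.det_mul, Matrix.det_mul, abs_mul, abs_mul,
      abs_det_permMat, abs_det_permMat, abs_det_G1]
    norm_num

lemma abs_det_prodSeq (p q r : Equiv.Perm (Fin 3)) (i : ℕ → Fin 2) (n : ℕ) :
    |Matrix.det (prodSeq (Gtrip (permMat p) (permMat q) (permMat r)) i n)| = (1/2)^n := by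
  induction n with
  | zero => simp [prodSeq]
  | succ n ih =>
      show |Matrix.det (_ * _)| = _
      rw [Matrix.det_mul, abs_mul, ih, abs_det_Gtrip, pow_succ]

/-! ### The base triangle -/

def baseTri : Set (ℝ × ℝ) :=
  convexHull ℝ (Set.range ![((0:ℝ),(0:ℝ)), (1,0), (0,1)])

lemma baseTri_eq :
    baseTri = {p : ℝ × ℝ | 0 ≤ p.1 ∧ 0 ≤ p.2 ∧ p.1 + p.2 ≤ 1} := by
  apply Set.Subset.antisymm
  · apply convexHull_min
    · rintro x ⟨j, rfl⟩
      fin_cases j <;> norm_num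
    · rintro x ⟨hx1, hx2, hx3⟩ y ⟨hy1, hy2, hy3⟩ a b ha hb hab
      refine ⟨?_, ?_, ?_⟩ <;> simp only [Prod.fst_add, Prod.snd_add, Prod.smul_fst,
        Prod.smul_snd, smul_eq_mul] <;> nlinarith
  · rintro ⟨x, y⟩ ⟨hx, hy, hxy⟩
    have hx' : (0:ℝ) ≤ x := hx
    have hy' : (0:ℝ) ≤ y := hy
    have hxy' : x + y ≤ 1 := hxy
    have hmem := Finset.centerMass_mem_convexHull (t := (Finset.univ : Finset (Fin 3)))
      (w := ![1 - x - y, x, y]) (z := ![((0:ℝ),(0:ℝ)), (1,0), (0,1)])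
      (by intro j _; fin_cases j <;> simp <;> linarith)
      (by simp [Fin.sum_univ_three]; linarith)
      (by intro j _; exact Set.mem_range_self j)
    convert hmem using 1
    · rfl
    simp [Finset.centerMass, Fin.sum_univ_three, Prod.ext_iff]
    constructor <;> (rw [show 1 - x - y + x + y = 1 by ring]; simp)

lemma measurableSet_baseTri_aux :
    MeasurableSet {p : ℝ × ℝ | 0 ≤ p.1 ∧ 0 ≤ p.2 ∧ p.1 + p.2 ≤ 1} := by
  have h1 : MeasurableSet {p : ℝ × ℝ | 0 ≤ p.1} :=
    measurableSet_le measurable_const measurable_fst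
  have h2 : MeasurableSet {p : ℝ × ℝ | 0 ≤ p.2} :=
    measurableSet_le measurable_const measurable_snd
  have h3 : MeasurableSet {p : ℝ × ℝ | p.1 + p.2 ≤ 1} :=
    measurableSet_le (measurable_fst.add measurable_snd) measurable_const
  exact h1.inter (h2.inter h3)

lemma volume_baseTri : volume baseTri = ENNReal.ofReal (1/2) := by
  rw [baseTri_eq]
  rw [MeasureTheory.Measure.volume_eq_prod,
    MeasureTheory.Measure.prod_apply measurableSet_baseTri_aux]
  have hslice : (fun x : ℝ => volume (Prod.mk x ⁻¹' {p : ℝ × ℝ | 0 ≤ p.1 ∧ 0 ≤ p.2 ∧ p.1 + p.2 ≤ 1}))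
      = Set.indicator (Set.Icc (0:ℝ) 1) (fun x => ENNReal.ofReal (1 - x)) := by
    funext x
    by_cases hx : 0 ≤ x
    · have hpre : (Prod.mk x ⁻¹' {p : ℝ × ℝ | 0 ≤ p.1 ∧ 0 ≤ p.2 ∧ p.1 + p.2 ≤ 1})
          = Set.Icc 0 (1 - x) := by
        ext y
        simp only [Set.mem_preimage, Set.mem_setOf_eq, Set.mem_Icc]
        constructor
        · rintro ⟨_, h1, h2⟩; exact ⟨h1, by linarith⟩
        · rintro ⟨h1, h2⟩; exact ⟨hx, h1, by linarith⟩
      rw [hpre, Real.volume_Icc]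
      by_cases hx1 : x ≤ 1
      · rw [Set.indicator_of_mem (Set.mem_Icc.mpr ⟨hx, hx1⟩)]; norm_num
      · rw [Set.indicator_of_notMem (by simp [Set.mem_Icc]; intro; linarith)]
        rw [ENNReal.ofReal_eq_zero]; linarith
    · have hpre : (Prod.mk x ⁻¹' {p : ℝ × ℝ | 0 ≤ p.1 ∧ 0 ≤ p.2 ∧ p.1 + p.2 ≤ 1}) = ∅ := by
        ext y; simp only [Set.mem_preimage, Set.mem_setOf_eq, Set.mem_empty_iff_false,
          iff_false]; rintro ⟨h, _, _⟩; exact hx h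
      rw [hpre, Set.indicator_of_notMem (by simp [Set.mem_Icc]; intro; linarith)]
      simp
  rw [hslice]
  rw [show (lintegral volume (Set.indicator (Set.Icc (0:ℝ) 1) (fun x => ENNReal.ofReal (1 - x))))
      = ∫⁻ x in Set.Icc (0:ℝ) 1, ENNReal.ofReal (1 - x)
    from lintegral_indicator measurableSet_Icc _]
  have hint : IntegrableOn (fun x : ℝ => 1 - x) (Set.Icc (0:ℝ) 1) :=
    Continuous.integrableOn_Icc (by continuity)
  have hnn : 0 ≤ᵐ[volume.restrict (Set.Icc (0:ℝ) 1)] fun x : ℝ => 1 - x :=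
    (ae_restrict_iff' measurableSet_Icc).2 (ae_of_all _ fun x hx => by
      simp only [Pi.zero_apply]; linarith [hx.2])
  rw [← MeasureTheory.ofReal_integral_eq_lintegral_ofReal hint hnn]
  congr 1
  rw [MeasureTheory.integral_Icc_eq_integral_Ioc,
    ← intervalIntegral.integral_of_le (zero_le_one)]
  rw [intervalIntegral.integral_sub intervalIntegrable_const
    intervalIntegral.intervalIntegrable_id]
  simp
  norm_num

/-! ### Main triangle volume lemma -/

lemma tri_vol (M : Matrix (Fin 3) (Fin 3) ℝ) (h0 : ∀ j, M 0 j = 1) :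
    volume (convexHull ℝ (Set.range fun j : Fin 3 => projPt fun k => M k j))
      = ENNReal.ofReal (|M.det| / 2) := by
  set w : Fin 3 → ℝ × ℝ := fun j => projPt fun k => M k j with hw
  have hwj : ∀ j, w j = (M 1 j, M 2 j) := by
    intro j; simp [hw, projPt, h0 j]
  set A : Matrix (Fin 2) (Fin 2) ℝ :=
    !![M 1 1 - M 1 0, M 1 2 - M 1 0; M 2 1 - M 2 0, M 2 2 - M 2 0] with hA
  set L := Matrix.toLin (Module.Basis.finTwoProd ℝ) (Module.Basis.finTwoProd ℝ) A with hL
  have hLapp : ∀ x : ℝ × ℝ, L x = ((M 1 1 - M 1 0) * x.1 + (M 1 2 - M 1 0) * x.2,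
      (M 2 1 - M 2 0) * x.1 + (M 2 2 - M 2 0) * x.2) := fun x =>
    Matrix.toLin_finTwoProd_apply _ _ _ _ x
  let aff : (ℝ × ℝ) →ᵃ[ℝ] (ℝ × ℝ) :=
    ⟨fun y => w 0 + L y, L, by intro pp v; simp only [map_add, vadd_eq_add]; abel⟩
  have haffapp : ∀ y, aff y = w 0 + L y := fun y => rfl
  have hcomp : w = aff ∘ ![((0:ℝ),(0:ℝ)), (1,0), (0,1)] := by
    funext j
    fin_cases j <;>
      simp only [Function.comp_apply, haffapp, hLapp, hwj, Matrix.cons_val_zero,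
        Matrix.cons_val_one, Matrix.head_cons, Prod.mk_add_mk, Prod.ext_iff] <;>
      constructor <;> norm_num <;> rfl
  have himg : (convexHull ℝ (Set.range w)) = aff '' baseTri := by
    rw [hcomp, Set.range_comp, baseTri, ← AffineMap.image_convexHull]
  rw [himg]
  have himg2 : aff '' baseTri = (w 0 + ·) '' (L '' baseTri) := by
    rw [← Set.image_comp]; rfl
  rw [himg2]
  rw [show ((w 0 + ·) '' (L '' baseTri)) = w 0 +ᵥ (L '' baseTri) by
    rw [← Set.image_vadd]; rfl]
  rw [measure_vadd]
  rw [Measure.addHaar_image_linearMap]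
  rw [hL, LinearMap.det_toLin, volume_baseTri]
  have hdetA : A.det = M.det := by
    rw [Matrix.det_fin_three, h0 0, h0 1, h0 2, hA, Matrix.det_fin_two]
    simp only [Matrix.cons_val_zero, Matrix.cons_val_one, Matrix.head_cons,
      Matrix.head_fin_const, Matrix.cons_val_fin_one, Matrix.of_apply]
    ring
  rw [hdetA, ← ENNReal.ofReal_mul (abs_nonneg _)]
  congr 1
  ring

theorem stmt2 (p q r : Equiv.Perm (Fin 3)) (n : ℕ) (hn : 1 ≤ n) (i : ℕ → Fin 2) :
    (∀ j : Fin 3,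
      (Vmat * prodSeq (Gtrip (permMat p) (permMat q) (permMat r)) i n) 0 j = 1) ∧
    volume (subTri (Gtrip (permMat p) (permMat q) (permMat r)) i n)
      = ENNReal.ofReal ((1 / 2) ^ (n + 1)) ∧
    2 * volume (subTri (Gtrip (permMat p) (permMat q) (permMat r)) i n)
      = volume (subTri (Gtrip (permMat p) (permMat q) (permMat r)) i (n - 1)) := by
  have key : ∀ m : ℕ, volume (subTri (Gtrip (permMat p) (permMat q) (permMat r)) i m)
      = ENNReal.ofReal ((1 / 2) ^ (m + 1)) := by
    intro m
    have h0 : ∀ j, (Vmat * prodSeq (Gtrip (permMat p) (permMat q) (permMat r)) i m) 0 j = 1 := by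
      intro j; rw [row0_eq_colSum]; exact colSum1_prodSeq p q r i m j
    rw [subTri, tri_vol _ h0]
    congr 1
    rw [Matrix.det_mul]
    have hV : Matrix.det Vmat = 1 := by
      rw [Vmat, Matrix.det_fin_three]; norm_num [Matrix.vecHead, Matrix.vecTail, Matrix.cons_val_two]
    rw [abs_mul, hV, abs_one, one_mul, abs_det_prodSeq, pow_succ]
    ring
  refine ⟨fun j => by rw [row0_eq_colSum]; exact colSum1_prodSeq p q r i n j, key n, ?_⟩
  rw [key n, key (n-1)]
  obtain ⟨m, rfl⟩ := Nat.exists_eq_add_of_le hn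
  have h1 : (1 + m) - 1 = m := by omega
  rw [h1]
  rw [show ((1:ℝ)/2)^(1+m+1) = (1/2) * (1/2)^(m+1) by ring]
  rw [ENNReal.ofReal_mul (by norm_num), ← mul_assoc]
  rw [show (2 : ENNReal) = ENNReal.ofReal 2 by simp]
  rw [← ENNReal.ofReal_mul (by norm_num)]
  norm_num
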